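/- Let G be a prime {P5, P5-bar}-free graph, let v be an antisimplicial vertex of G, and choose u non-adjacent to v minimizing |N(u) ∩ N(v)|. Then u is a simplicial vertex. -/

import Mathlib

open SimpleGraph

variable {V : Type*} {W : Type*}

/-- A vertex `v` is *mixed* on a set `X` if it has both a neighbor and a non-neighbor in `X`. -/
def Mixed (G : SimpleGraph V) (v : V) (X : Set V) : Prop :=
  (∃ x ∈ X, G.Adj v x) ∧ (∃ x ∈ X, ¬ G.Adj v x)

/-- A homogeneous set: `1 < |X| < |V(G)|` and no outside vertex is mixed on `X`. -/
def IsHomogeneousSet [Fintype V] (G : SimpleGraph V) (X : Set V) : Prop :=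
  1 < X.ncard ∧ X.ncard < Fintype.card V ∧ ∀ v ∉ X, ¬ Mixed G v X

/-- A graph is prime if it has at least four vertices and no homogeneous set. -/
def IsPrimeGraph [Fintype V] (G : SimpleGraph V) : Prop :=
  4 ≤ Fintype.card V ∧ ∀ X : Set V, ¬ IsHomogeneousSet G X

/-- A vertex is simplicial if its neighborhood is a clique. -/
def Simplicial (G : SimpleGraph V) (v : V) : Prop :=
  G.IsClique (G.neighborSet v)

/-- A vertex is antisimplicial if its non-neighborhood is a stable set. -/
def Antisimplicial (G : SimpleGraph V) (v : V) : Prop :=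
  Gᶜ.IsClique {u | ¬ G.Adj v u}

/-- `G` is `H`-free: there is no induced copy of `H` in `G`. -/
def HFree (H : SimpleGraph W) (G : SimpleGraph V) : Prop :=
  ¬ Nonempty (H ↪g G)

/-- Build an induced `P5` from five vertices with the right adjacencies. -/
lemma p5_emb (H : SimpleGraph V) (a b c d e : V)
    (h1 : H.Adj a b) (h2 : H.Adj b c) (h3 : H.Adj c d) (h4 : H.Adj d e)
    (n1 : ¬H.Adj a c) (n2 : ¬H.Adj a d) (n3 : ¬H.Adj a e)
    (n4 : ¬H.Adj b d) (n5 : ¬H.Adj b e) (n6 : ¬H.Adj c e)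
    (d1 : a ≠ c) (d2 : a ≠ d) (d3 : a ≠ e) (d4 : b ≠ d) (d5 : b ≠ e) (d6 : c ≠ e) :
    Nonempty (pathGraph 5 ↪g H) := by
  have e1 := h1.ne; have e2 := h2.ne; have e3 := h3.ne; have e4 := h4.ne
  have s1 := h1.symm; have s2 := h2.symm; have s3 := h3.symm; have s4 := h4.symm
  have m1 : ¬H.Adj c a := fun h => n1 h.symm
  have m2 : ¬H.Adj d a := fun h => n2 h.symm
  have m3 : ¬H.Adj e a := fun h => n3 h.symm
  have m4 : ¬H.Adj d b := fun h => n4 h.symm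
  have m5 : ¬H.Adj e b := fun h => n5 h.symm
  have m6 : ¬H.Adj e c := fun h => n6 h.symm
  refine ⟨⟨⟨![a,b,c,d,e], ?_⟩, ?_⟩⟩
  · intro i j hij
    fin_cases i <;> fin_cases j <;>
      simp_all [Matrix.cons_val_zero, Matrix.cons_val_one] <;> decide
  · intro i j
    change H.Adj (![a,b,c,d,e] i) (![a,b,c,d,e] j) ↔ _
    fin_cases i <;> fin_cases j <;>
      simp_all [pathGraph_adj, Matrix.cons_val_zero, Matrix.cons_val_one] <;> decide

/-- Build an induced `P5`-complement from five vertices with the right adjacencies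
(`a-b-c-d-e` is a path in the complement). -/
lemma p5c_emb (G : SimpleGraph V) (a b c d e : V)
    (n1 : ¬G.Adj a b) (n2 : ¬G.Adj b c) (n3 : ¬G.Adj c d) (n4 : ¬G.Adj d e)
    (h1 : G.Adj a c) (h2 : G.Adj a d) (h3 : G.Adj a e)
    (h4 : G.Adj b d) (h5 : G.Adj b e) (h6 : G.Adj c e)
    (d1 : a ≠ b) (d2 : b ≠ c) (d3 : c ≠ d) (d4 : d ≠ e) :
    Nonempty ((pathGraph 5)ᶜ ↪g G) := by
  have e1 := h1.ne; have e2 := h2.ne; have e3 := h3.ne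
  have e4 := h4.ne; have e5 := h5.ne; have e6 := h6.ne
  have s1 := h1.symm; have s2 := h2.symm; have s3 := h3.symm
  have s4 := h4.symm; have s5 := h5.symm; have s6 := h6.symm
  have m1 : ¬G.Adj b a := fun h => n1 h.symm
  have m2 : ¬G.Adj c b := fun h => n2 h.symm
  have m3 : ¬G.Adj d c := fun h => n3 h.symm
  have m4 : ¬G.Adj e d := fun h => n4 h.symm
  have f1 : b ≠ a := d1.symm
  have f2 : c ≠ b := d2.symm
  have f3 : d ≠ c := d3.symm
  have f4 : e ≠ d := d4.symm
  refine ⟨⟨⟨![a,b,c,d,e], ?_⟩, ?_⟩⟩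
  · intro i j hij
    fin_cases i <;> fin_cases j <;>
      simp_all [Matrix.cons_val_zero, Matrix.cons_val_one] <;> decide
  · intro i j
    change G.Adj (![a,b,c,d,e] i) (![a,b,c,d,e] j) ↔ _
    fin_cases i <;> fin_cases j <;>
      simp_all [compl_adj, pathGraph_adj, Matrix.cons_val_zero, Matrix.cons_val_one] <;> decide

theorem stmt9 [Fintype V] (G : SimpleGraph V) (hprime : IsPrimeGraph G)
    (hfree1 : HFree (pathGraph 5) G) (hfree2 : HFree ((pathGraph 5)ᶜ) G)
    (v : V) (hv : Antisimplicial G v)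
    (u : V) (huv : u ≠ v) (hnadj : ¬ G.Adj u v)
    (hmin : ∀ u', u' ≠ v → ¬ G.Adj u' v →
      (G.neighborSet u ∩ G.neighborSet v).ncard ≤ (G.neighborSet u' ∩ G.neighborSet v).ncard) :
    Simplicial G u := by
  classical
  -- non-neighbours of v form a stable set
  have hstable : ∀ x y : V, ¬ G.Adj v x → ¬ G.Adj v y → x ≠ y → ¬ G.Adj x y := by
    intro x y hx hy hxy
    have h := hv (Set.mem_setOf.mpr hx) (Set.mem_setOf.mpr hy) hxy
    rw [compl_adj] at h
    exact h.2
  have hvu : ¬ G.Adj v u := fun h => hnadj h.symm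
  -- the neighbourhood of any non-neighbour of v is contained in N(v)
  have hNsub : ∀ x : V, x ≠ v → ¬ G.Adj v x → ∀ y, G.Adj x y → G.Adj v y := by
    intro x hxv hvx y hxy
    by_contra hvy
    exact hstable x y hvx hvy hxy.ne hxy
  have hNu : ∀ y, G.Adj u y → G.Adj v y := hNsub u huv hvu
  -- the "house" lemma
  have house : ∀ w p q : V, G.Adj v w → ¬ G.Adj u w → G.Adj u p → G.Adj u q →
      ¬ G.Adj p q → G.Adj w p → G.Adj w q := by
    intro w p q hvw huw hup huq hpq hwp
    by_contra hwq
    have hwu : w ≠ u := by rintro rfl; exact hvu hvw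
    have hqw : q ≠ w := by rintro rfl; exact huw huq
    have hvq : G.Adj v q := hNu q huq
    have hvp : G.Adj v p := hNu p hup
    have hpqne : p ≠ q := by rintro rfl; exact hwq hwp
    exact hfree2 (p5c_emb G p q w u v hpq (fun h => hwq h.symm) (fun h => huw h.symm) hnadj
      hwp.symm hup.symm hvp.symm huq.symm hvq.symm hvw.symm hpqne hqw hwu huv)
  -- suppose u is not simplicial
  by_contra hns
  rw [Simplicial, isClique_iff, Set.Pairwise] at hns
  push_neg at hns
  obtain ⟨a0, ha0, b0, hb0, hab0, hnab0⟩ := hns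
  have ha0' : G.Adj u a0 := ha0
  have hb0' : G.Adj u b0 := hb0
  -- the anticomponent of a0 inside N(u)
  set R : V → V → Prop := fun p q => G.Adj u p ∧ G.Adj u q ∧ ¬ G.Adj p q with hRdef
  set Z : Set V := {z | G.Adj u z ∧ Relation.ReflTransGen R a0 z} with hZdef
  have hZN : ∀ z ∈ Z, G.Adj u z := fun z hz => hz.1
  -- vertices of A0 are complete or anticomplete to Z
  have hA0iff : ∀ w, G.Adj v w → ¬ G.Adj u w → ∀ z, Relation.ReflTransGen R a0 z →
      (G.Adj w a0 ↔ G.Adj w z) := by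
    intro w hvw huw z hz
    induction hz with
    | refl => exact Iff.rfl
    | @tail p q hp hstep ih =>
      exact ih.trans ⟨fun hwp => house w p q hvw huw hstep.1 hstep.2.1 hstep.2.2 hwp,
        fun hwq => house w q p hvw huw hstep.2.1 hstep.1 (fun h => hstep.2.2 h.symm) hwq⟩
  -- mixed vertices along an anticomponent give a mixed consecutive pair
  have hBpair : ∀ x : V, ∀ z, Relation.ReflTransGen R a0 z →
      (G.Adj x a0 ↔ G.Adj x z) ∨
      ∃ p q, G.Adj u p ∧ G.Adj u q ∧ ¬ G.Adj p q ∧ G.Adj x p ∧ ¬ G.Adj x q := by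
    intro x z hz
    induction hz with
    | refl => exact Or.inl Iff.rfl
    | @tail p q hp hstep ih =>
      rcases ih with hiff | hpair
      · by_cases hxp : G.Adj x p <;> by_cases hxq : G.Adj x q
        · exact Or.inl (hiff.trans (iff_of_true hxp hxq))
        · exact Or.inr ⟨p, q, hstep.1, hstep.2.1, hstep.2.2, hxp, hxq⟩
        · exact Or.inr ⟨q, p, hstep.2.1, hstep.1, fun h => hstep.2.2 h.symm, hxq, hxp⟩
        · exact Or.inl (hiff.trans (iff_of_false hxp hxq))
      · exact Or.inr hpair
  -- Z is not homogeneous, so there is a mixed vertex on Z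
  have ha0Z : a0 ∈ Z := ⟨ha0', Relation.ReflTransGen.refl⟩
  have hb0Z : b0 ∈ Z := ⟨hb0', Relation.ReflTransGen.refl.tail ⟨ha0', hb0', hnab0⟩⟩
  have huZ : u ∉ Z := fun h => G.irrefl h.1
  have h1 : 1 < Z.ncard := (Set.one_lt_ncard (Set.toFinite Z)).mpr ⟨a0, ha0Z, b0, hb0Z, hab0⟩
  have h2 : Z.ncard < Fintype.card V := by
    have hss : Z ⊂ Set.univ := Set.ssubset_univ_iff.mpr
      (by intro h; exact huZ (h.symm ▸ Set.mem_univ u))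
    calc Z.ncard < (Set.univ : Set V).ncard := Set.ncard_lt_ncard hss (Set.toFinite _)
      _ = Fintype.card V := by rw [Set.ncard_univ, Nat.card_eq_fintype_card]
  obtain ⟨x, hxZ, hmix⟩ : ∃ x, x ∉ Z ∧ Mixed G x Z := by
    by_contra hcon
    push_neg at hcon
    exact hprime.2 Z ⟨h1, h2, hcon⟩
  obtain ⟨⟨z1, hz1, hxz1⟩, ⟨z2, hz2, hxz2⟩⟩ := hmix
  have hxu : x ≠ u := by rintro rfl; exact hxz2 hz2.1
  by_cases hvx : G.Adj v x
  · by_cases hux : G.Adj u x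
    · exact hxZ ⟨hux, hz2.2.tail ⟨hz2.1, hux, fun h => hxz2 h.symm⟩⟩
    · have i1 := hA0iff x hvx hux z1 hz1.2
      have i2 := hA0iff x hvx hux z2 hz2.2
      exact hxz2 (i2.mp (i1.mpr hxz1))
  · -- x is a non-neighbour of v
    have hxv : x ≠ v := by rintro rfl; exact hxz2 (hNu z2 hz2.1)
    have hxu' : ¬ G.Adj x u := hstable x u hvx hvu hxu
    have hux' : ¬ G.Adj u x := fun h => hxu' h.symm
    obtain ⟨p, q, hup, huq, hpq, hxp, hxq⟩ :
        ∃ p q, G.Adj u p ∧ G.Adj u q ∧ ¬ G.Adj p q ∧ G.Adj x p ∧ ¬ G.Adj x q := by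
      rcases hBpair x z1 hz1.2 with hiff1 | hpair1
      · rcases hBpair x z2 hz2.2 with hiff2 | hpair2
        · exact absurd (hiff2.mp (hiff1.mpr hxz1)) hxz2
        · exact hpair2
      · exact hpair1
    -- every neighbour of x is a neighbour of u
    have hxsub : ∀ y, G.Adj x y → G.Adj u y := by
      intro y hxy
      by_contra huy
      have hvy : G.Adj v y := hNsub x hxv hvx y hxy
      have hyu : y ≠ u := by rintro rfl; exact hvu hvy
      have hqx : q ≠ x := by rintro rfl; exact hux' huq
      by_cases hyp : G.Adj y p
      · have hyq : G.Adj y q := house y p q hvy huy hup huq hpq hyp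
        have hpqne : p ≠ q := by rintro rfl; exact hxq hxp
        exact hfree2 (p5c_emb G p q x u y hpq (fun h => hxq h.symm) hxu' huy
          hxp.symm hup.symm hyp.symm huq.symm hyq.symm hxy hpqne hqx hxu hyu.symm)
      · have hyq : ¬ G.Adj y q := fun hyq =>
          hyp (house y q p hvy huy huq hup (fun h => hpq h.symm) hyq)
        have d1 : y ≠ p := by rintro rfl; exact huy hup
        have d3 : y ≠ q := by rintro rfl; exact huy huq
        have d5 : x ≠ q := fun h => hqx h.symm
        have d6 : p ≠ q := by rintro rfl; exact hxq hxp
        exact hfree1 (p5_emb G y x p u q hxy.symm hxp hup.symm huq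
          hyp (fun h => huy h.symm) hyq hxu' hxq hpq d1 hyu d3 hxu d5 d6)
    -- contradiction with minimality
    have hsubset : G.neighborSet x ∩ G.neighborSet v ⊆ G.neighborSet u ∩ G.neighborSet v := by
      rintro y ⟨hy1, hy2⟩
      exact ⟨hxsub y hy1, hy2⟩
    have hss : G.neighborSet x ∩ G.neighborSet v ⊂ G.neighborSet u ∩ G.neighborSet v := by
      rw [Set.ssubset_iff_of_subset hsubset]
      exact ⟨q, ⟨huq, hNu q huq⟩, fun h => hxq h.1⟩
    have hlt := Set.ncard_lt_ncard hss (Set.toFinite _)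
    have hge := hmin x hxv (fun h => hvx h.symm)
    omega
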